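/- Let {B_k}_{k∈ℕ} be an enumeration of all closed cubes in ℝ^n whose sides are parallel to the coordinate axes, whose centers have all coordinates rational, and whose edge length equals 1/(2^{l−1}√n) for some l ∈ ℕ, l ≥ 1. Fix positive reals t_k with Σ_{k=1}^∞ t_k = 1, and for f ∈ L^p(ℝ^n), 1 ≤ p < ∞, define the KS^p-norm ‖f‖_{KS^p} = (Σ_{k=1}^∞ t_k |∫_{B_k} f dλ_n|^p)^{1/p}. If K is a subset of L^p(ℝ^n) that is compact in the weak topology of L^p(ℝ^n), then K is compact with respect to the metric d(f, g) = ‖f − g‖_{KS^p}. -/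

import Mathlib

open MeasureTheory
open scoped ENNReal

/-- The closed cube in `ℝ^n` with center `c ∈ ℚ^n`, sides parallel to the coordinate
axes, and edge length `1/(2^(l-1) √n)`: the closed ball of radius half the edge length
around `c` in the sup metric on `ℝ^n`. -/
def ratCube (n : ℕ) (c : Fin n → ℚ) (l : ℕ) : Set (Fin n → ℝ) :=
  Metric.closedBall (fun i => (c i : ℝ)) (1 / (2 ^ (l - 1) * Real.sqrt n) / 2)

/-- `B : ℕ → Set ℝ^n` enumerates the family of all closed cubes with sides parallel to
the coordinate axes, rational centers, and edge length `1/(2^(l-1) √n)` for some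
`l ≥ 1`. -/
def EnumeratesRatCubes (n : ℕ) (B : ℕ → Set (Fin n → ℝ)) : Prop :=
  (∀ k, ∃ (c : Fin n → ℚ) (l : ℕ), 1 ≤ l ∧ B k = ratCube n c l) ∧
  (∀ (c : Fin n → ℚ) (l : ℕ), 1 ≤ l → ∃ k, B k = ratCube n c l)

/-- The `KS^p` norm `(Σ_k t_k |∫_{B_k} f dλ_n|^p)^{1/p}` (for `p < ∞`), resp.
`sup_k |∫_{B_k} f dλ_n|` (for `p = ∞`). -/
noncomputable def KSnorm (n : ℕ) (B : ℕ → Set (Fin n → ℝ)) (t : ℕ → ℝ) (p : ℝ≥0∞)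
    (f : (Fin n → ℝ) → ℂ) : ℝ :=
  if p = ⊤ then ⨆ k, ‖∫ x in B k, f x ∂volume‖
  else (∑' k, t k * ‖∫ x in B k, f x ∂volume‖ ^ p.toReal) ^ (1 / p.toReal)

private lemma ratCube_volume_le (n : ℕ) (c : Fin n → ℚ) (l : ℕ) :
    volume (ratCube n c l) ≤ 1 := by
  rw [ratCube]
  set r : ℝ := 1 / (2 ^ (l - 1) * Real.sqrt n) / 2 with hr
  have hr0 : 0 ≤ r := by positivity
  rw [Real.volume_pi_closedBall _ hr0, Fintype.card_fin]
  rcases Nat.eq_zero_or_pos n with h | h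
  · subst h; simp
  · have h2r : 2 * r ≤ 1 := by
      have h1 : (1 : ℝ) ≤ 2 ^ (l - 1) * Real.sqrt n := by
        have hs : (1 : ℝ) ≤ Real.sqrt n := by
          rw [show (1:ℝ) = Real.sqrt 1 by simp]
          exact Real.sqrt_le_sqrt (by exact_mod_cast h)
        have h2 : (1 : ℝ) ≤ 2 ^ (l - 1) := one_le_pow₀ one_le_two
        nlinarith
      have : 2 * r = 1 / (2 ^ (l - 1) * Real.sqrt n) := by rw [hr]; ring
      rw [this]
      exact div_le_one_of_le₀ h1 (by positivity)
    calc ENNReal.ofReal ((2 * r) ^ n) ≤ ENNReal.ofReal 1 :=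
          ENNReal.ofReal_le_ofReal (pow_le_one₀ (by positivity) h2r)
      _ = 1 := ENNReal.ofReal_one

private lemma setIntegral_norm_le_norm {n : ℕ} {p : ℝ≥0∞} [Fact (1 ≤ p)] (hp' : p ≠ ⊤)
    (f : Lp ℂ p (volume : Measure (Fin n → ℝ))) {s : Set (Fin n → ℝ)}
    (hs : volume s ≤ 1) :
    ‖∫ x in s, f x ∂(volume : Measure (Fin n → ℝ))‖ ≤ ‖f‖ := by
  have hp1 : 1 ≤ p := Fact.out
  have hq1 : (1 : ℝ) ≤ p.toReal := by
    rw [← ENNReal.toReal_one]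
    exact ENNReal.toReal_mono hp' hp1
  have h1 : ‖∫ x in s, f x ∂volume‖ ≤ (∫⁻ x in s, ENNReal.ofReal ‖f x‖ ∂volume).toReal :=
    norm_integral_le_lintegral_norm _
  have h2 : (∫⁻ x in s, ENNReal.ofReal ‖f x‖ ∂volume) = eLpNorm (⇑f) 1 (volume.restrict s) := by
    rw [eLpNorm_one_eq_lintegral_enorm]
    simp_rw [ofReal_norm]
  have h3 : eLpNorm (⇑f) 1 (volume.restrict s) ≤
      eLpNorm (⇑f) p (volume.restrict s) *
        ((volume.restrict s) Set.univ) ^ (1 / (1 : ℝ≥0∞).toReal - 1 / p.toReal) :=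
    eLpNorm_le_eLpNorm_mul_rpow_measure_univ hp1 ((Lp.aestronglyMeasurable f).restrict)
  have h4 : ((volume.restrict s) Set.univ) ^ (1 / (1 : ℝ≥0∞).toReal - 1 / p.toReal) ≤ 1 := by
    rw [Measure.restrict_apply_univ]
    apply ENNReal.rpow_le_one hs
    have : 1 / p.toReal ≤ 1 := by
      rw [div_le_one (by linarith)]; exact hq1
    simp only [ENNReal.toReal_one]
    linarith
  have h5 : eLpNorm (⇑f) p (volume.restrict s) ≤ eLpNorm (⇑f) p volume :=
    eLpNorm_mono_measure _ Measure.restrict_le_self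
  have h6 : eLpNorm (⇑f) 1 (volume.restrict s) ≤ eLpNorm (⇑f) p volume := by
    calc eLpNorm (⇑f) 1 (volume.restrict s) ≤ _ := h3
      _ ≤ eLpNorm (⇑f) p volume * 1 := mul_le_mul' h5 h4
      _ = eLpNorm (⇑f) p volume := mul_one _
  rw [Lp.norm_def]
  refine le_trans h1 ?_
  rw [h2]
  exact ENNReal.toReal_mono (Lp.eLpNorm_ne_top f) h6

private lemma exists_setIntegral_dual (n : ℕ) (p : ℝ≥0∞) [Fact (1 ≤ p)] (hp' : p ≠ ⊤)
    {s : Set (Fin n → ℝ)} (hs : volume s ≤ 1) :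
    ∃ φ : StrongDual ℂ (Lp ℂ p (volume : Measure (Fin n → ℝ))),
      ∀ f : Lp ℂ p (volume : Measure (Fin n → ℝ)), φ f = ∫ x in s, f x ∂volume := by
  haveI hfin : IsFiniteMeasure ((volume : Measure (Fin n → ℝ)).restrict s) :=
    ⟨by rw [Measure.restrict_apply_univ]; exact lt_of_le_of_lt hs ENNReal.one_lt_top⟩
  have hint : ∀ f : Lp ℂ p (volume : Measure (Fin n → ℝ)),
      Integrable (⇑f) ((volume : Measure (Fin n → ℝ)).restrict s) := fun f =>
    ((Lp.memLp f).restrict s).integrable Fact.out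
  refine ⟨LinearMap.mkContinuous
    { toFun := fun f => ∫ x in s, f x ∂volume
      map_add' := ?_
      map_smul' := ?_ } 1 ?_, fun f => rfl⟩
  · intro f g
    have h1 : ⇑(f + g) =ᵐ[volume.restrict s] ⇑f + ⇑g := (Lp.coeFn_add f g).restrict
    rw [integral_congr_ae h1]
    simpa using integral_add (hint f) (hint g)
  · intro a f
    have h1 : ⇑(a • f) =ᵐ[volume.restrict s] a • ⇑f := (Lp.coeFn_smul a f).restrict
    rw [integral_congr_ae h1]
    simpa using integral_smul a (⇑f)
  · intro f
    rw [one_mul]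
    exact setIntegral_norm_le_norm hp' f hs

private def KStop (n : ℕ) (B : ℕ → Set (Fin n → ℝ)) (t : ℕ → ℝ) (p : ℝ≥0∞) :
    TopologicalSpace (Lp ℂ p (volume : Measure (Fin n → ℝ))) :=
  TopologicalSpace.generateFrom
    {S | ∃ (g : Lp ℂ p (volume : Measure (Fin n → ℝ))) (r : ℝ), 0 < r ∧
      S = {f : Lp ℂ p (volume : Measure (Fin n → ℝ)) | KSnorm n B t p (⇑f - ⇑g) < r}}

set_option maxHeartbeats 2000000 in
/-- a weakly compact subset `K` of `L^p(ℝ^n)`, `1 ≤ p < ∞`, is compact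
with respect to the metric `d(f,g) = ‖f - g‖_{KS^p}` (whose topology is generated by
the `KS^p`-balls). -/
theorem weakly_compact_is_KS_compact
    (n : ℕ) (B : ℕ → Set (Fin n → ℝ)) (hB : EnumeratesRatCubes n B)
    (t : ℕ → ℝ) (ht : ∀ k, 0 < t k) (hts : ∑' k, t k = 1)
    (p : ℝ≥0∞) [Fact (1 ≤ p)] (hp' : p ≠ ⊤)
    (K : Set (Lp ℂ p (volume : Measure (Fin n → ℝ))))
    (hK : @IsCompact (WeakSpace ℂ (Lp ℂ p (volume : Measure (Fin n → ℝ)))) _ K) :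
    @IsCompact (Lp ℂ p (volume : Measure (Fin n → ℝ)))
      (TopologicalSpace.generateFrom
        {S | ∃ (g : Lp ℂ p (volume : Measure (Fin n → ℝ))) (r : ℝ), 0 < r ∧
          S = {f : Lp ℂ p (volume : Measure (Fin n → ℝ)) | KSnorm n B t p (⇑f - ⇑g) < r}})
      K := by
  classical
  obtain ⟨hB1, -⟩ := hB
  have hp1 : (1:ℝ≥0∞) ≤ p := Fact.out
  set q : ℝ := p.toReal with hqdef
  have hq1 : (1:ℝ) ≤ q := by
    rw [hqdef, ← ENNReal.toReal_one]; exact ENNReal.toReal_mono hp' hp1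
  have hq0 : (0:ℝ) < q := lt_of_lt_of_le one_pos hq1
  have hvol : ∀ k, volume (B k) ≤ 1 := by
    intro k
    obtain ⟨c, l, -, hk⟩ := hB1 k
    rw [hk]; exact ratCube_volume_le n c l
  choose φ hφ using fun k => exists_setIntegral_dual n p hp' (hvol k)
  have hφc : ∀ k, Continuous fun f : WeakSpace ℂ (Lp ℂ p (volume : Measure (Fin n → ℝ))) =>
      φ k f := fun k => WeakBilin.eval_continuous _ (φ k)
  have hφle : ∀ k f, ‖φ k f‖ ≤ ‖f‖ := by
    intro k f; rw [hφ k f]; exact setIntegral_norm_le_norm hp' f (hvol k)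
  have hφsub : ∀ k (f g : Lp ℂ p (volume : Measure (Fin n → ℝ))),
      φ k f - φ k g = φ k (f - g) := fun k f g => (map_sub (φ k) f g).symm
  have hφdiff : ∀ k (f g : Lp ℂ p (volume : Measure (Fin n → ℝ))),
      ‖φ k f - φ k g‖ ≤ ‖f‖ + ‖g‖ := by
    intro k f g
    rw [hφsub]
    exact (hφle k _).trans (norm_sub_le f g)
  -- rewrite of KSnorm
  have hKS : ∀ f g : Lp ℂ p (volume : Measure (Fin n → ℝ)),
      KSnorm n B t p (⇑f - ⇑g) = (∑' k, t k * ‖φ k f - φ k g‖ ^ q) ^ (1/q) := by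
    intro f g
    rw [KSnorm, if_neg hp']
    congr 1
    apply tsum_congr; intro k
    congr 3
    rw [hφ k f, hφ k g]
    haveI : IsFiniteMeasure ((volume : Measure (Fin n → ℝ)).restrict (B k)) :=
      ⟨by rw [Measure.restrict_apply_univ]; exact lt_of_le_of_lt (hvol k) ENNReal.one_lt_top⟩
    rw [← integral_sub (((Lp.memLp f).restrict _).integrable hp1)
      (((Lp.memLp g).restrict _).integrable hp1)]
    rfl
  -- summability facts
  have htnn : ∀ k, 0 ≤ t k := fun k => (ht k).le
  have hsumt : Summable t := by
    by_contra h
    rw [tsum_eq_zero_of_not_summable h] at hts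
    norm_num at hts
  have hsummand : ∀ (C : ℝ) (a : ℕ → ℝ), (∀ k, 0 ≤ a k) → (∀ k, a k ≤ C) →
      Summable (fun k => t k * a k ^ q) := by
    intro C a ha hb
    refine Summable.of_nonneg_of_le
      (fun k => mul_nonneg (htnn k) (Real.rpow_nonneg (ha k) q))
      (fun k => ?_) (hsumt.mul_right (C ^ q))
    exact mul_le_mul_of_nonneg_left (Real.rpow_le_rpow (ha k) (hb k) hq0.le) (htnn k)
  have hwq : ∀ (x : ℝ) (k : ℕ), 0 ≤ x → (t k ^ (1/q) * x) ^ q = t k * x ^ q := by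
    intro x k hx
    rw [Real.mul_rpow (Real.rpow_nonneg (htnn k) _) hx, ← Real.rpow_mul (htnn k),
      one_div_mul_cancel hq0.ne', Real.rpow_one]
  -- triangle inequality
  have tri : ∀ f h g : Lp ℂ p (volume : Measure (Fin n → ℝ)),
      (∑' k, t k * ‖φ k f - φ k g‖ ^ q) ^ (1/q) ≤
      (∑' k, t k * ‖φ k f - φ k h‖ ^ q) ^ (1/q) +
      (∑' k, t k * ‖φ k h - φ k g‖ ^ q) ^ (1/q) := by
    intro f h g
    set u : ℕ → ℝ := fun k => t k ^ (1/q) * ‖φ k f - φ k h‖ with hu_def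
    set v : ℕ → ℝ := fun k => t k ^ (1/q) * ‖φ k h - φ k g‖ with hv_def
    have hu0 : ∀ k, 0 ≤ u k := fun k =>
      mul_nonneg (Real.rpow_nonneg (htnn k) _) (norm_nonneg _)
    have hv0 : ∀ k, 0 ≤ v k := fun k =>
      mul_nonneg (Real.rpow_nonneg (htnn k) _) (norm_nonneg _)
    have hueq : ∀ k, u k ^ q = t k * ‖φ k f - φ k h‖ ^ q := fun k =>
      hwq _ k (norm_nonneg _)
    have hveq : ∀ k, v k ^ q = t k * ‖φ k h - φ k g‖ ^ q := fun k =>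
      hwq _ k (norm_nonneg _)
    have hu : Summable fun k => u k ^ q := by
      simp only [hueq]
      exact hsummand (‖f‖ + ‖h‖) _ (fun k => norm_nonneg _) (fun k => hφdiff k f h)
    have hv : Summable fun k => v k ^ q := by
      simp only [hveq]
      exact hsummand (‖h‖ + ‖g‖) _ (fun k => norm_nonneg _) (fun k => hφdiff k h g)
    obtain ⟨hsum_uv, hmink⟩ := Real.Lp_add_le_tsum_of_nonneg hq1 hu0 hv0 hu hv
    have hmono : (∑' k, t k * ‖φ k f - φ k g‖ ^ q) ≤ ∑' k, (u k + v k) ^ q := by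
      refine Summable.tsum_le_tsum (fun k => ?_)
        (hsummand (‖f‖ + ‖g‖) _ (fun k => norm_nonneg _) (fun k => hφdiff k f g)) hsum_uv
      have h1 : ‖φ k f - φ k g‖ ≤ ‖φ k f - φ k h‖ + ‖φ k h - φ k g‖ := by
        have := dist_triangle (φ k f) (φ k h) (φ k g)
        simpa [dist_eq_norm] using this
      rw [← hwq _ k (norm_nonneg _)]
      refine Real.rpow_le_rpow (mul_nonneg (Real.rpow_nonneg (htnn k) _) (norm_nonneg _))
        ?_ hq0.le
      calc t k ^ (1/q) * ‖φ k f - φ k g‖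
          ≤ t k ^ (1/q) * (‖φ k f - φ k h‖ + ‖φ k h - φ k g‖) :=
            mul_le_mul_of_nonneg_left h1 (Real.rpow_nonneg (htnn k) _)
        _ = u k + v k := by rw [hu_def, hv_def]; ring
    simp only [hueq, hveq] at hmink
    calc (∑' k, t k * ‖φ k f - φ k g‖ ^ q) ^ (1/q)
        ≤ (∑' k, (u k + v k) ^ q) ^ (1/q) := by
          refine Real.rpow_le_rpow ?_ hmono (by positivity)
          exact tsum_nonneg fun k =>
            mul_nonneg (htnn k) (Real.rpow_nonneg (norm_nonneg _) q)
      _ ≤ _ := hmink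
  -- norm-boundedness of K
  obtain ⟨M, hM0, hMK⟩ : ∃ M : ℝ, 0 ≤ M ∧ ∀ f ∈ K, ‖f‖ ≤ M := by
    have key : ∀ ψ : StrongDual ℂ (Lp ℂ p (volume : Measure (Fin n → ℝ))), ∃ C, ∀ i : K,
        ‖(NormedSpace.inclusionInDoubleDual ℂ (Lp ℂ p (volume : Measure (Fin n → ℝ)))
          (i : Lp ℂ p (volume : Measure (Fin n → ℝ)))) ψ‖ ≤ C := by
      intro ψ
      have hc : Continuous fun x : WeakSpace ℂ (Lp ℂ p (volume : Measure (Fin n → ℝ))) => ψ x :=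
        WeakBilin.eval_continuous _ ψ
      have hcpt : IsCompact ((fun x : WeakSpace ℂ (Lp ℂ p (volume : Measure (Fin n → ℝ))) =>
          ψ x) '' K) := hK.image hc
      obtain ⟨C, hC⟩ := hcpt.isBounded.exists_norm_le
      exact ⟨C, fun i => hC _ (Set.mem_image_of_mem _ i.2)⟩
    obtain ⟨C, hC⟩ := banach_steinhaus
      (g := fun i : K => NormedSpace.inclusionInDoubleDual ℂ
        (Lp ℂ p (volume : Measure (Fin n → ℝ))) (i : Lp ℂ p (volume : Measure (Fin n → ℝ)))) key
    refine ⟨max C 0, le_max_right _ _, fun f hf => ?_⟩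
    refine NormedSpace.norm_le_dual_bound ℂ f (le_max_right _ _) (fun ψ => ?_)
    calc ‖ψ f‖
        = ‖(NormedSpace.inclusionInDoubleDual ℂ
            (Lp ℂ p (volume : Measure (Fin n → ℝ))) f) ψ‖ := rfl
      _ ≤ ‖NormedSpace.inclusionInDoubleDual ℂ
            (Lp ℂ p (volume : Measure (Fin n → ℝ))) f‖ * ‖ψ‖ :=
          ContinuousLinearMap.le_opNorm _ _
      _ ≤ max C 0 * ‖ψ‖ := by
          refine mul_le_mul_of_nonneg_right ?_ (norm_nonneg _)
          exact le_trans (hC ⟨f, hf⟩) (le_max_left _ _)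
  -- tails of ∑ t
  have htail : ∀ c : ℝ, 0 < c → ∃ N : ℕ, (∑' k, t (k + N)) < c := by
    intro c hc
    have h1 := hsumt.hasSum.tendsto_sum_nat
    rw [hts] at h1
    have h2 : ∀ᶠ N in Filter.atTop, 1 - c < ∑ i ∈ Finset.range N, t i :=
      h1.eventually (eventually_gt_nhds (by linarith))
    obtain ⟨N, hN⟩ := h2.exists
    refine ⟨N, ?_⟩
    have hsplit := Summable.sum_add_tsum_nat_add N hsumt
    rw [hts] at hsplit
    linarith
  -- the identity map is continuous from the weak topology on K to the KS topology
  have hco : @ContinuousOn (WeakSpace ℂ (Lp ℂ p (volume : Measure (Fin n → ℝ))))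
      (Lp ℂ p (volume : Measure (Fin n → ℝ))) _ (KStop n B t p) id K := by
    intro f₀ hf₀
    refine TopologicalSpace.tendsto_nhds_generateFrom_iff.mpr ?_
    rintro S ⟨g, r, hr, rfl⟩ hf₀S
    simp only [Set.mem_setOf_eq, id_eq] at hf₀S
    replace hf₀S : (∑' k, t k * ‖φ k f₀ - φ k g‖ ^ q) ^ (1/q) < r := (hKS f₀ g).symm.trans_lt hf₀S
    set ε : ℝ := r - (∑' k, t k * ‖φ k f₀ - φ k g‖ ^ q) ^ (1/q) with hε
    have hεpos : 0 < ε := by rw [hε]; linarith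
    have hMq0 : (0:ℝ) < (2*M)^q + 1 := by positivity
    obtain ⟨N, hN⟩ := htail (((ε/2)^q) / ((2*M)^q + 1)) (by positivity)
    refine mem_nhdsWithin.mpr ⟨⋂ k ∈ Finset.range N,
      (fun f : WeakSpace ℂ (Lp ℂ p (volume : Measure (Fin n → ℝ))) => φ k f) ⁻¹'
        Metric.ball (φ k f₀) (ε/2), ?_, ?_, ?_⟩
    · exact isOpen_biInter_finset fun k _ => Metric.isOpen_ball.preimage (hφc k)
    · refine Set.mem_iInter₂.mpr fun k _ => ?_
      have : dist (φ k f₀) (φ k f₀) < ε/2 := by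
        rw [dist_self]; linarith
      exact this
    · rintro f ⟨hfU, hfK⟩
      show KSnorm n B t p
        (⇑(show Lp ℂ p (volume : Measure (Fin n → ℝ)) from f) - ⇑g) < r
      rw [hKS f g]
      have hball : ∀ k < N, ‖φ k f - φ k f₀‖ < ε/2 := by
        intro k hk
        have := Set.mem_iInter₂.mp hfU k (Finset.mem_range.mpr hk)
        simpa [Metric.mem_ball, dist_eq_norm] using this
      have hbound : ∀ k, ‖φ k f - φ k f₀‖ ≤ 2*M := by
        intro k
        have h1 := hφdiff k f f₀
        have h2 := hMK f hfK
        have h3 := hMK f₀ hf₀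
        linarith
      -- the sum S := ∑ t k ‖φ k f - φ k f₀‖^q is < ε^q
      have hSsum : Summable fun k => t k * ‖φ k f - φ k f₀‖ ^ q :=
        hsummand (2*M) _ (fun k => norm_nonneg _) hbound
      have hsplit := Summable.sum_add_tsum_nat_add N hSsum
      have hhead : (∑ k ∈ Finset.range N, t k * ‖φ k f - φ k f₀‖ ^ q) ≤ (ε/2)^q := by
        calc (∑ k ∈ Finset.range N, t k * ‖φ k f - φ k f₀‖ ^ q)
            ≤ ∑ k ∈ Finset.range N, t k * (ε/2)^q := by
              refine Finset.sum_le_sum fun k hk => ?_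
              exact mul_le_mul_of_nonneg_left
                (Real.rpow_le_rpow (norm_nonneg _) (hball k (Finset.mem_range.mp hk)).le hq0.le)
                (htnn k)
          _ = (∑ k ∈ Finset.range N, t k) * (ε/2)^q := by rw [Finset.sum_mul]
          _ ≤ 1 * (ε/2)^q := by
              refine mul_le_mul_of_nonneg_right ?_ (by positivity)
              rw [← hts]; exact Summable.sum_le_tsum _ (fun i _ => htnn i) hsumt
          _ = (ε/2)^q := one_mul _
      have htail2 : (∑' k, t (k + N) * ‖φ (k + N) f - φ (k + N) f₀‖ ^ q) < (ε/2)^q := by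
        have h1 : (∑' k, t (k + N) * ‖φ (k + N) f - φ (k + N) f₀‖ ^ q) ≤
            (∑' k, t (k + N)) * (2*M)^q := by
          rw [← tsum_mul_right]
          refine Summable.tsum_le_tsum (fun k => ?_) ((summable_nat_add_iff N).mpr hSsum)
            (((summable_nat_add_iff N).mpr hsumt).mul_right _)
          exact mul_le_mul_of_nonneg_left
            (Real.rpow_le_rpow (norm_nonneg _) (hbound _) hq0.le) (htnn _)
        have h2 : (∑' k, t (k + N)) * (2*M)^q < (ε/2)^q := by
          have h3 : (0:ℝ) ≤ (2*M)^q := Real.rpow_nonneg (by linarith) q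
          have h4 : (∑' k, t (k + N)) ≥ 0 := tsum_nonneg fun k => htnn _
          calc (∑' k, t (k + N)) * (2*M)^q
              ≤ (((ε/2)^q) / ((2*M)^q + 1)) * (2*M)^q := by nlinarith [hN]
            _ < (ε/2)^q := by
                rw [div_mul_eq_mul_div, div_lt_iff₀ hMq0]
                nlinarith [Real.rpow_pos_of_pos (show (0:ℝ) < ε/2 by linarith) q]
        linarith
      have hSlt : (∑' k, t k * ‖φ k f - φ k f₀‖ ^ q) < ε ^ q := by
        have h2q : (ε/2)^q + (ε/2)^q ≤ ε^q := by
          have e1 : (ε/2)^q = ε^q / 2^q := Real.div_rpow hεpos.le (by norm_num : (0:ℝ) ≤ 2) q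
          have e2 : (2:ℝ) ≤ 2^q := by
            have := Real.rpow_le_rpow_of_exponent_le (one_le_two) hq1
            simpa [Real.rpow_one] using this
          have e3 : (0:ℝ) < 2^q := by positivity
          have e4 : ε^q / 2^q ≤ ε^q / 2 := by
            refine div_le_div_of_nonneg_left (Real.rpow_nonneg hεpos.le q) two_pos e2
          rw [e1]; linarith
        linarith [hsplit, hhead, htail2]
      have hfin : (∑' k, t k * ‖φ k f - φ k f₀‖ ^ q) ^ (1/q) < ε := by
        have h5 : ((∑' k, t k * ‖φ k f - φ k f₀‖ ^ q)) ^ (1/q) < (ε^q) ^ (1/q) :=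
          Real.rpow_lt_rpow (tsum_nonneg fun k =>
            mul_nonneg (htnn k) (Real.rpow_nonneg (norm_nonneg _) q)) hSlt (by positivity)
        rwa [← Real.rpow_mul hεpos.le, mul_one_div_cancel hq0.ne', Real.rpow_one] at h5
      calc (∑' k, t k * ‖φ k f - φ k g‖ ^ q) ^ (1/q)
          ≤ (∑' k, t k * ‖φ k f - φ k f₀‖ ^ q) ^ (1/q) +
            (∑' k, t k * ‖φ k f₀ - φ k g‖ ^ q) ^ (1/q) := tri f f₀ g
        _ < ε + (∑' k, t k * ‖φ k f₀ - φ k g‖ ^ q) ^ (1/q) := by linarith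
        _ = r := by rw [hε]; ring
  have himg : @IsCompact _ (KStop n B t p)
      ((id : WeakSpace ℂ (Lp ℂ p (volume : Measure (Fin n → ℝ))) →
        Lp ℂ p (volume : Measure (Fin n → ℝ))) '' K) :=
    @IsCompact.image_of_continuousOn _ _ _ (KStop n B t p) _ _ hK hco
  exact Eq.mp (congrArg (@IsCompact (Lp ℂ p (volume : Measure (Fin n → ℝ))) (KStop n B t p))
    (show ((id : WeakSpace ℂ (Lp ℂ p (volume : Measure (Fin n → ℝ))) →
        Lp ℂ p (volume : Measure (Fin n → ℝ))) '' K) = K from Set.image_id K)) himg
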